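/- (Theorem 2, vanishing non-critical weight limit.) Let g₁, …, g_T : Ω → ℝ^d be random vectors on a probability space with E‖gᵢ‖² < ∞, let U be a subspace of ℝ^d with orthogonal projections P onto U and P⊥ onto U⊥, let K ⊆ {1, …, T}, and assume Bounded Noise Correlation with constant ρ ≥ 0. Suppose there is a vector μ ∈ U with ‖μ‖² ≥ σ² > 0 such that E[P gᵢ] = μ for all i ∈ K and E[P gᵢ] = 0 for all i ∉ K. Fix indicator weights on K: ωᵢ = 1 for i ∈ K and ωᵢ = 0 for i ∉ K, with |K| ≥ c > 0, and let δ = (1 + ρ(T − 1)) ∑_{i ∈ K} E‖P⊥ gᵢ‖² > 0. Then the estimator ĝ = ∑_{i ∈ K} gᵢ satisfies E‖P ĝ‖² / E‖P⊥ ĝ‖² ≥ c² σ² / δ; that is, when the weight placed on non-critical tokens is zero, the signal-to-noise ratio is bounded below by c²σ²/δ, which is the limit of the Theorem 2 bound as ∑_{i ∉ K} ωᵢ² → 0. -/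

import Mathlib

open MeasureTheory Finset
open scoped RealInnerProductSpace BigOperators

/-- The orthogonal projection onto a subspace `W` of `ℝ^d`, viewed as a map `ℝ^d → ℝ^d`. -/
noncomputable def Pproj {d : ℕ} (W : Submodule ℝ (EuclideanSpace ℝ (Fin d))) :
    EuclideanSpace ℝ (Fin d) →L[ℝ] EuclideanSpace ℝ (Fin d) :=
  W.subtypeL.comp (W.orthogonalProjection)
lemma Pproj_norm_le {d : ℕ} (W : Submodule ℝ (EuclideanSpace ℝ (Fin d)))
    (v : EuclideanSpace ℝ (Fin d)) : ‖Pproj W v‖ ≤ ‖v‖ := by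
  calc ‖Pproj W v‖ = ‖W.orthogonalProjection v‖ := rfl
    _ ≤ ‖W.orthogonalProjection‖ * ‖v‖ := (W.orthogonalProjection).le_opNorm v
    _ ≤ 1 * ‖v‖ :=
        mul_le_mul_of_nonneg_right (Submodule.orthogonalProjectionOnto_norm_le W) (norm_nonneg v)
    _ = ‖v‖ := one_mul _

/-- second moments + mean: signal lower bound -/
lemma sig_lb {Ω : Type*} [MeasurableSpace Ω] (μ : Measure Ω) [IsProbabilityMeasure μ]
    {E : Type*} [NormedAddCommGroup E] [InnerProductSpace ℝ E] [CompleteSpace E]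
    {h : Ω → E} (hint : Integrable h μ) (h2int : Integrable (fun x => ‖h x‖ ^ 2) μ) :
    ‖∫ x, h x ∂μ‖ ^ 2 ≤ ∫ x, ‖h x‖ ^ 2 ∂μ := by
  set m := ∫ x, h x ∂μ with hm
  have hinner : Integrable (fun x => ⟪m, h x⟫) μ := by
    have := (innerSL ℝ m).integrable_comp hint
    simpa [Function.comp] using this
  have h0 : 0 ≤ ∫ x, ‖h x - m‖ ^ 2 ∂μ := integral_nonneg fun x => sq_nonneg _
  have hexp : ∀ x, ‖h x - m‖ ^ 2 = ‖h x‖ ^ 2 - 2 * ⟪m, h x⟫ + ‖m‖ ^ 2 := by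
    intro x
    rw [norm_sub_sq_real, real_inner_comm]
  rw [show (fun x => ‖h x - m‖ ^ 2) = fun x => ‖h x‖ ^ 2 - 2 * ⟪m, h x⟫ + ‖m‖ ^ 2
      from funext hexp] at h0
  have i1 : Integrable (fun x => ‖h x‖ ^ 2 - 2 * ⟪m, h x⟫) μ :=
    h2int.sub (hinner.const_mul 2)
  rw [integral_add i1 (integrable_const _),
      integral_sub h2int (hinner.const_mul 2), integral_const_mul 2,
      integral_inner hint, ← hm, real_inner_self_eq_norm_sq, integral_const] at h0
  simp at h0
  linarith


set_option maxHeartbeats 1000000 in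
/-- Theorem 2, vanishing non-critical weight limit: with indicator weights
placed exactly on the knowledge-critical set `K` (so `ĝ = ∑_{i ∈ K} gᵢ`), a common signal
mean `μvec ∈ U` with `‖μvec‖² ≥ σ² > 0` on `K`, `|K| ≥ c > 0`, and
`δ = (1 + ρ(T − 1)) ∑_{i ∈ K} E‖P⊥ gᵢ‖² > 0`, the signal-to-noise ratio satisfies
`E‖P ĝ‖² / E‖P⊥ ĝ‖² ≥ c² σ² / δ`. -/
theorem stmt15 {Ω : Type*} [MeasurableSpace Ω] (μ : Measure Ω) [IsProbabilityMeasure μ]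
    {d T : ℕ} (g : Fin T → Ω → EuclideanSpace ℝ (Fin d))
    (hmeas : ∀ i, Measurable (g i))
    (hL2 : ∀ i, Integrable (fun x => ‖g i x‖ ^ 2) μ)
    (U : Submodule ℝ (EuclideanSpace ℝ (Fin d)))
    (K : Finset (Fin T))
    (ρ : ℝ) (hρ : 0 ≤ ρ)
    (hBNC : ∀ i j, i ≠ j →
      |∫ x, ⟪Pproj Uᗮ (g i x), Pproj Uᗮ (g j x)⟫ ∂μ|
        ≤ ρ * Real.sqrt (∫ x, ‖Pproj Uᗮ (g i x)‖ ^ 2 ∂μ)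
            * Real.sqrt (∫ x, ‖Pproj Uᗮ (g j x)‖ ^ 2 ∂μ))
    (μvec : EuclideanSpace ℝ (Fin d)) (hμU : μvec ∈ U)
    (σ : ℝ) (hσpos : 0 < σ ^ 2) (hμσ : σ ^ 2 ≤ ‖μvec‖ ^ 2)
    (hmeanK : ∀ i ∈ K, (∫ x, Pproj U (g i x) ∂μ) = μvec)
    (hmean0 : ∀ i ∉ K, (∫ x, Pproj U (g i x) ∂μ) = 0)
    (c : ℝ) (hc : 0 < c) (hcK : c ≤ (K.card : ℝ))
    (δ : ℝ)
    (hδ : δ = (1 + ρ * ((T : ℝ) - 1)) * ∑ i ∈ K, ∫ x, ‖Pproj Uᗮ (g i x)‖ ^ 2 ∂μ)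
    (hδpos : 0 < δ)
    (hnoise : 0 < ∫ x, ‖Pproj Uᗮ (∑ i ∈ K, g i x)‖ ^ 2 ∂μ) :
    c ^ 2 * σ ^ 2 / δ
      ≤ (∫ x, ‖Pproj U (∑ i ∈ K, g i x)‖ ^ 2 ∂μ)
          / ∫ x, ‖Pproj Uᗮ (∑ i ∈ K, g i x)‖ ^ 2 ∂μ := by
  classical
  set P := Pproj U with hP
  set Q := Pproj Uᗮ with hQ
  -- basic integrability
  have hgmem : ∀ i, MemLp (g i) 2 μ := fun i =>
    (memLp_two_iff_integrable_sq_norm (hmeas i).aestronglyMeasurable).2 (hL2 i)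
  have hgint : ∀ i, Integrable (g i) μ := fun i => (hgmem i).integrable (by norm_num)
  have mQ : ∀ i, Measurable fun x => Q (g i x) := fun i =>
    Q.continuous.measurable.comp (hmeas i)
  have hQ2 : ∀ i, Integrable (fun x => ‖Q (g i x)‖ ^ 2) μ := by
    intro i
    refine (hL2 i).mono ((mQ i).norm.pow_const 2).aestronglyMeasurable
      (Filter.Eventually.of_forall fun x => ?_)
    simp only [norm_pow, norm_norm]
    exact pow_le_pow_left₀ (norm_nonneg _) (Pproj_norm_le _ _) 2
  have hinner : ∀ i j, Integrable (fun x => ⟪Q (g i x), Q (g j x)⟫) μ := by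
    intro i j
    refine ((hL2 i).add (hL2 j)).mono
      ((mQ i).inner (mQ j)).aestronglyMeasurable
      (Filter.Eventually.of_forall fun x => ?_)
    have h1 : |⟪Q (g i x), Q (g j x)⟫| ≤ ‖Q (g i x)‖ * ‖Q (g j x)‖ :=
      abs_real_inner_le_norm _ _
    have h2 : ‖Q (g i x)‖ ≤ ‖g i x‖ := Pproj_norm_le _ _
    have h3 : ‖Q (g j x)‖ ≤ ‖g j x‖ := Pproj_norm_le _ _
    have h4 : (0:ℝ) ≤ ‖g i x‖ ^ 2 + ‖g j x‖ ^ 2 := by positivity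
    simp only [Pi.add_apply, Real.norm_eq_abs, abs_of_nonneg h4]
    nlinarith [sq_nonneg (‖g i x‖ - ‖g j x‖),
      mul_le_mul h2 h3 (norm_nonneg (Q (g j x))) (norm_nonneg (g i x))]
  set a : Fin T → ℝ := fun i => ∫ x, ‖Q (g i x)‖ ^ 2 ∂μ with ha
  have hanonneg : ∀ i, 0 ≤ a i := fun i => integral_nonneg fun x => sq_nonneg _
  set A : ℝ := ∑ i ∈ K, a i with hA
  -- NOISE bound
  have hnoise_eq : (∫ x, ‖Q (∑ i ∈ K, g i x)‖ ^ 2 ∂μ)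
      = ∑ i ∈ K, ∑ j ∈ K, ∫ x, ⟪Q (g i x), Q (g j x)⟫ ∂μ := by
    have e1 : ∀ x, ‖Q (∑ i ∈ K, g i x)‖ ^ 2
        = ∑ i ∈ K, ∑ j ∈ K, ⟪Q (g i x), Q (g j x)⟫ := by
      intro x
      rw [show Q (∑ i ∈ K, g i x) = ∑ i ∈ K, Q (g i x) from map_sum Q _ _,
        ← real_inner_self_eq_norm_sq, sum_inner]
      exact Finset.sum_congr rfl fun i _ => inner_sum _ _ _
    simp_rw [e1]
    rw [integral_finset_sum K fun i _ => integrable_finset_sum K fun j _ => hinner i j]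
    exact Finset.sum_congr rfl fun i _ =>
      integral_finset_sum K fun j _ => hinner i j
  have hdiag : ∀ i, (∫ x, ⟪Q (g i x), Q (g i x)⟫ ∂μ) = a i := by
    intro i; simp_rw [real_inner_self_eq_norm_sq]; rfl
  set S : ℝ := ∑ i ∈ K, Real.sqrt (a i) with hS
  have hcardT : (K.card : ℝ) ≤ (T : ℝ) := by
    exact_mod_cast (K.card_le_univ).trans_eq (by simp)
  have hoffb : ∀ i ∈ K, ∑ j ∈ K.erase i, ∫ x, ⟪Q (g i x), Q (g j x)⟫ ∂μ
      ≤ ρ * (Real.sqrt (a i) * (S - Real.sqrt (a i))) := by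
    intro i hi
    have : ∑ j ∈ K.erase i, ∫ x, ⟪Q (g i x), Q (g j x)⟫ ∂μ
        ≤ ∑ j ∈ K.erase i, ρ * Real.sqrt (a i) * Real.sqrt (a j) := by
      refine Finset.sum_le_sum fun j hj => ?_
      have hij : i ≠ j := (Finset.ne_of_mem_erase hj).symm
      exact (le_abs_self _).trans (hBNC i j hij)
    refine this.trans ?_
    rw [← Finset.mul_sum, Finset.sum_erase_eq_sub hi, ← hS]
    ring_nf
    exact le_of_eq (by ring)
  have hS2 : S ^ 2 ≤ (K.card : ℝ) * A := by
    have := sq_sum_le_card_mul_sum_sq (s := K) (f := fun i => Real.sqrt (a i))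
    simpa [Real.sq_sqrt (hanonneg _), ← hS, ← hA] using this
  have hsumsqrt : ∑ i ∈ K, Real.sqrt (a i) * (S - Real.sqrt (a i)) = S ^ 2 - A := by
    simp_rw [mul_sub]
    rw [Finset.sum_sub_distrib, ← Finset.sum_mul, ← hS]
    simp_rw [Real.mul_self_sqrt (hanonneg _)]
    rw [← hA, sq]
  have hnoise_le : (∫ x, ‖Q (∑ i ∈ K, g i x)‖ ^ 2 ∂μ) ≤ δ := by
    rw [hnoise_eq]
    have step1 : ∑ i ∈ K, ∑ j ∈ K, ∫ x, ⟪Q (g i x), Q (g j x)⟫ ∂μ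
        = A + ∑ i ∈ K, ∑ j ∈ K.erase i, ∫ x, ⟪Q (g i x), Q (g j x)⟫ ∂μ := by
      rw [hA, ← Finset.sum_add_distrib]
      refine Finset.sum_congr rfl fun i hi => ?_
      rw [← hdiag i]
      exact (Finset.add_sum_erase K _ hi).symm
    rw [step1]
    have step2 : ∑ i ∈ K, ∑ j ∈ K.erase i, ∫ x, ⟪Q (g i x), Q (g j x)⟫ ∂μ
        ≤ ρ * (S ^ 2 - A) := by
      calc ∑ i ∈ K, ∑ j ∈ K.erase i, ∫ x, ⟪Q (g i x), Q (g j x)⟫ ∂μ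
          ≤ ∑ i ∈ K, ρ * (Real.sqrt (a i) * (S - Real.sqrt (a i))) :=
            Finset.sum_le_sum hoffb
        _ = ρ * (S ^ 2 - A) := by rw [← Finset.mul_sum, hsumsqrt]
    have hAnn : 0 ≤ A := Finset.sum_nonneg fun i _ => hanonneg i
    have step3 : ρ * (S ^ 2 - A) ≤ ρ * ((T : ℝ) - 1) * A := by
      have h5 : S ^ 2 - A ≤ ((T : ℝ) - 1) * A := by
        nlinarith [mul_le_mul_of_nonneg_right hcardT hAnn]
      calc ρ * (S ^ 2 - A) ≤ ρ * (((T : ℝ) - 1) * A) :=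
            mul_le_mul_of_nonneg_left h5 hρ
        _ = ρ * ((T : ℝ) - 1) * A := by ring
    rw [hδ]
    nlinarith [step2, step3]
  -- SIGNAL bound
  have hPmem : MemLp (fun x => P (∑ i ∈ K, g i x)) 2 μ := by
    have hsum : MemLp (fun x => ∑ i ∈ K, g i x) 2 μ := by
      have h := memLp_finsetSum' K fun i (_ : i ∈ K) => hgmem i
      rwa [show (∑ i ∈ K, g i) = fun x => ∑ i ∈ K, g i x from
        funext fun x => by simp] at h
    exact P.comp_memLp' hsum
  have hPint : Integrable (fun x => P (∑ i ∈ K, g i x)) μ :=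
    hPmem.integrable (by norm_num)
  have hP2int : Integrable (fun x => ‖P (∑ i ∈ K, g i x)‖ ^ 2) μ :=
    (memLp_two_iff_integrable_sq_norm hPmem.aestronglyMeasurable).1 hPmem
  have hmean : (∫ x, P (∑ i ∈ K, g i x) ∂μ) = (K.card : ℕ) • μvec := by
    have e2 : ∀ x, P (∑ i ∈ K, g i x) = ∑ i ∈ K, P (g i x) := fun x => map_sum P _ _
    simp_rw [e2]
    rw [integral_finset_sum K fun i _ => P.integrable_comp (hgint i),
      Finset.sum_congr rfl hmeanK, Finset.sum_const]
  have hsig : c ^ 2 * σ ^ 2 ≤ ∫ x, ‖P (∑ i ∈ K, g i x)‖ ^ 2 ∂μ := by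
    have hlb := sig_lb μ hPint hP2int
    rw [hmean] at hlb
    have hnorm : ‖(K.card : ℕ) • μvec‖ ^ 2 = (K.card : ℝ) ^ 2 * ‖μvec‖ ^ 2 := by
      rw [← Nat.cast_smul_eq_nsmul ℝ, norm_smul]
      simp [mul_pow]
    rw [hnorm] at hlb
    refine le_trans ?_ hlb
    exact mul_le_mul (pow_le_pow_left₀ hc.le hcK 2) hμσ hσpos.le (sq_nonneg _)
  exact div_le_div₀ (integral_nonneg fun x => sq_nonneg _) hsig hnoise hnoise_le
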